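/- Let μ = ω₂^∨ = (1/2, 1/2), J = S̃ ∖ {s₁} = {s₀, s₂}, σ = id, τ := τ₂. Then: (i) EO^J_{σ,cox}(μ) = {τ, s₁τ}; (ii) EO^J(μ) ∖ EO^J_{σ,cox}(μ) = {s₁s₂τ, s₁s₀τ, s₁s₂s₀τ}; (iii) all three elements of the complement are σ-straight; (iv) their Newton points are ν̄_{s₁s₂τ} = ν̄_{s₁s₀τ} = (1/2, 0) and ν̄_{s₁s₂s₀τ} = (1/2, 1/2). (Note that s₁s₂τ and s₁s₀τ each have supp_σ equal to all of S̃, since conjugation by τ₂ interchanges s₀ and s₂, so neither lies in EO^J_{σ,cox}(μ).) -/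

import Mathlib

/- Extended affine Weyl group of type C̃₂ with X = {λ ∈ (1/2)ℤ² : λ₁-λ₂ ∈ ℤ}, realized
   inside the permutation group of ℚ²: t^λ·u acts by x ↦ λ + u(x), u a signed permutation. -/

open Classical
noncomputable section

abbrev V2 := Fin 2 → ℚ
abbrev Wt2 := Equiv.Perm V2

/-- translation t^λ -/
def transl (lam : V2) : Wt2 := Equiv.addLeft lam
/-- coordinate permutation -/
def permV (u : Equiv.Perm (Fin 2)) : Wt2 := u.arrowCongr (Equiv.refl ℚ)
/-- sign change in coordinate j -/
def negAt (j : Fin 2) : Wt2 :=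
  Function.Involutive.toPerm (fun v => fun i => if i = j then -(v i) else v i)
    (by intro v; funext i; by_cases h : i = j <;> simp [h])
/-- standard basis vector -/
def eV (i : Fin 2) : V2 := Pi.single i 1
/-- standard inner product -/
def dotp (v w : V2) : ℚ := ∑ i, v i * w i
/-- the linear part of an affine transformation -/
def linp (w : Wt2) : V2 → V2 := fun x => w x - w 0

/-- s₁ : the transposition of the two coordinates -/
def s1 : Wt2 := permV (Equiv.swap 0 1)
/-- s₂ : the sign change in coordinate 2 -/
def s2 : Wt2 := negAt 1
/-- s₀ = t^{e₁}·(sign change in coordinate 1) -/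
def s0 : Wt2 := transl (eV 0) * negAt 0
/-- r : e₁ ↦ -e₂, e₂ ↦ -e₁ -/
def rC : Wt2 := negAt 0 * (negAt 1 * permV (Equiv.swap 0 1))
/-- the length-zero element τ₂ = t^{(1/2,1/2)}·r -/
def tau2 : Wt2 := transl (fun _ => 1/2) * rC

/-- the set S̃ of simple reflections of W_a -/
def St : Set Wt2 := {s0, s1, s2}
/-- Ω = {1, τ₂} -/
def Om : Set Wt2 := {1, tau2}

/-- the positive roots e₁-e₂, e₁+e₂, 2e₁, 2e₂ -/
def PhiC2 : Set V2 := {eV 0 - eV 1, eV 0 + eV 1, eV 0 + eV 0, eV 1 + eV 1}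

/-- the contribution of a positive root α to the length of w = t^λ·u -/
def lterm (w : Wt2) (α : V2) : ℚ :=
  if linp w⁻¹ α ∈ PhiC2 then |dotp (w 0) α| else |dotp (w 0) α - 1|

/-- the length function on W̃ -/
def ell (w : Wt2) : ℚ :=
  lterm w (eV 0 - eV 1) + lterm w (eV 0 + eV 1) + lterm w (eV 0 + eV 0) + lterm w (eV 1 + eV 1)

/-- `l` is a reduced word for `w` in the Coxeter system (W_a, S̃) -/
def IsRed (w : Wt2) (l : List Wt2) : Prop :=
  (∀ s ∈ l, s ∈ St) ∧ l.prod = w ∧ (l.length : ℚ) = ell w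

/-- Bruhat order on W_a, via the subword property -/
def bleWa (u u' : Wt2) : Prop :=
  ∃ l l' : List Wt2, IsRed u' l ∧ l'.Sublist l ∧ l'.prod = u

/-- Bruhat order on W̃ = W_a ⊔ W_a·τ₂ -/
def ble (w w' : Wt2) : Prop :=
  ∃ u u' om, om ∈ Om ∧ w = u * om ∧ w' = u' * om ∧ bleWa u u'

/-- the finite Weyl group W₀ = {±1}² ⋊ S₂, generated by s₁, s₂ -/
def W0 : Subgroup Wt2 := Subgroup.closure {s1, s2}

/-- the admissible set Adm(μ) -/
def Adm (μ : V2) : Set Wt2 := {w | ∃ x ∈ W0, ble w (transl ((x : Wt2) μ))}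

/-- the standard parabolic subgroup W_J -/
def WJ (J : Set Wt2) : Subgroup Wt2 := Subgroup.closure J

/-- ^JW̃ : elements of minimal length in their coset W_J·w -/
def minJ (J : Set Wt2) : Set Wt2 := {w | ∀ x ∈ WJ J, ell w ≤ ell (x * w)}

/-- the Ekedahl-Oort elements EO^J(μ) = (W_J·Adm(μ)·W_J) ∩ ^JW̃ -/
def EO (J : Set Wt2) (μ : V2) : Set Wt2 :=
  {w | (∃ x ∈ WJ J, ∃ y ∈ WJ J, ∃ a ∈ Adm μ, w = x * a * y) ∧ w ∈ minJ J}

/-- δ_w = Ad(ω) ∘ σ -/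
def deltaW (sig : MulAut Wt2) (om : Wt2) : MulAut Wt2 := MulAut.conj om * sig

/-- supp_σ(w) for w = u·ω -/
def suppsig (sig : MulAut Wt2) (w : Wt2) : Set Wt2 :=
  {s | ∃ u om l, om ∈ Om ∧ w = u * om ∧ IsRed u l ∧
        ∃ s0 ∈ l, ∃ m : ℤ, s = ((deltaW sig om) ^ m) s0}

/-- the number of orbits of an automorphism δ on a set A -/
def orbCount (δ : MulAut Wt2) (A : Set Wt2) : ℕ :=
  {O : Set Wt2 | ∃ s ∈ A, O = {t | ∃ m : ℤ, (δ ^ m) s = t}}.ncard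

/-- w = u·ω is a σ-Coxeter element of W_{supp_σ(w)} -/
def IsCox (sig : MulAut Wt2) (w : Wt2) : Prop :=
  ∃ u om, om ∈ Om ∧ w = u * om ∧
    ell u = (orbCount (deltaW sig om) (suppsig sig w) : ℚ)

/-- EO^J_{σ,cox}(μ) -/
def EOcox (sig : MulAut Wt2) (J : Set Wt2) (μ : V2) : Set Wt2 :=
  {w | w ∈ EO J μ ∧ suppsig sig w ≠ St ∧ IsCox sig w}

/-- w·σ(w)·σ²(w)⋯σ^{m-1}(w) -/
def sigmaProd (sig : MulAut Wt2) (w : Wt2) (m : ℕ) : Wt2 :=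
  (((List.range m).map fun k => (sig ^ k) w)).prod

/-- w is σ-straight -/
def IsStraight (sig : MulAut Wt2) (w : Wt2) : Prop :=
  ∀ m : ℕ, 1 ≤ m → ell (sigmaProd sig w m) = m * ell w

/-- ν is the Newton point of w -/
def IsNewton (sig : MulAut Wt2) (w : Wt2) (ν : V2) : Prop :=
  ∃ (m : ℕ) (lam : V2), 1 ≤ m ∧ sig ^ m = 1 ∧ sigmaProd sig w m = transl lam ∧
    (∃ x ∈ W0, ν = (x : Wt2) (fun j => lam j / (m : ℚ))) ∧
    ν 1 ≤ ν 0 ∧ 0 ≤ ν 1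

namespace EO14


/-! ## Computable model of half-integral affine signed-permutation maps -/

abbrev MGM := (Fin 2 → ℤ) × (Fin 2 → Fin 2 → ℤ)

def vz (a b : ℤ) : Fin 2 → ℤ := fun i => if i = 0 then a else b
def mz (a b c d : ℤ) : Fin 2 → Fin 2 → ℤ :=
  fun i j => if i = 0 then (if j = 0 then a else b) else (if j = 0 then c else d)

def actM (g : MGM) (x : V2) : V2 := fun i => (g.1 i : ℚ)/2 + ∑ j, (g.2 i j : ℚ) * x j

def gmul (g h : MGM) : MGM :=
  (fun i => g.1 i + ∑ j, g.2 i j * h.1 j, fun i j => ∑ k, g.2 i k * h.2 k j)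

def gone : MGM := (vz 0 0, mz 1 0 0 1)

def ginv (g : MGM) : MGM := (fun i => -∑ j, g.2 j i * g.1 j, fun i j => g.2 j i)

lemma actM_gmul (g h : MGM) (x : V2) : actM (gmul g h) x = actM g (actM h x) := by
  funext i
  simp only [actM, gmul, Fin.sum_univ_two]
  push_cast
  ring

lemma actM_gone (x : V2) : actM gone x = x := by
  funext i
  fin_cases i <;> simp [actM, gone, vz, mz, Fin.sum_univ_two]

/-- `g` is a model of `w` -/
def Rp (w : Wt2) (g : MGM) : Prop := ∀ x, w x = actM g x

lemma Rp.mul {w w' : Wt2} {g g' : MGM} (h : Rp w g) (h' : Rp w' g') :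
    Rp (w * w') (gmul g g') := by
  intro x
  rw [Equiv.Perm.mul_apply, h' x, h (actM g' x), actM_gmul]

lemma Rp.one : Rp 1 gone := by intro x; rw [actM_gone]; rfl

lemma Rp.inv {w : Wt2} {g gi : MGM} (h : Rp w g) (hgi : gmul g gi = gone) :
    Rp w⁻¹ gi := by
  intro x
  apply w.injective
  rw [h (actM gi x), ← actM_gmul, hgi, actM_gone]
  exact (Equiv.apply_symm_apply w x)

def bq (j : Fin 2) : V2 := fun t => if t = j then 1 else 0

lemma Rp.inj {w : Wt2} {g g' : MGM} (h : Rp w g) (h' : Rp w g') : g = g' := by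
  have key : ∀ x, actM g x = actM g' x := fun x => (h x).symm.trans (h' x)
  have hlam : g.1 = g'.1 := by
    funext i
    have h0 := congrFun (key 0) i
    simp only [actM, Pi.zero_apply, mul_zero, Finset.sum_const_zero, add_zero] at h0
    have : (g.1 i : ℚ) = g'.1 i := by linarith
    exact_mod_cast this
  have hmat : g.2 = g'.2 := by
    funext i j
    have h1 := congrFun (key (bq j)) i
    have h0 := congrFun (key 0) i
    simp only [actM, bq, Pi.zero_apply, mul_zero, Finset.sum_const_zero, add_zero,
      Fin.sum_univ_two] at h1 h0
    fin_cases j <;> norm_num [hlam] at h1 h0 ⊢ <;> exact h1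
  exact Prod.ext hlam hmat

lemma Rp.eq {w w' : Wt2} {g g' : MGM} (h : Rp w g) (h' : Rp w' g') (hg : g = g') :
    w = w' := by
  apply Equiv.ext
  intro x
  rw [h x, h' x, hg]

lemma Rp.ne {w w' : Wt2} {g g' : MGM} (h : Rp w g) (h' : Rp w' g') (hg : g ≠ g') :
    w ≠ w' := by
  intro he
  exact hg (Rp.inj h (he ▸ h'))

lemma Rp.cast {w : Wt2} {g g' : MGM} (h : Rp w g) (hg : g = g') : Rp w g' := hg ▸ h

lemma Rp.congr {w w' : Wt2} {g : MGM} (h : Rp w g) (hw : w = w') : Rp w' g := hw ▸ h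

/-! ## Models of the generators -/

def gS0 : MGM := (vz 2 0, mz (-1) 0 0 1)
def gS1 : MGM := (vz 0 0, mz 0 1 1 0)
def gS2 : MGM := (vz 0 0, mz 1 0 0 (-1))
def gTau : MGM := (vz 1 1, mz 0 (-1) (-1) 0)

lemma Rp_transl (v : V2) (a b : ℤ) (ha : v 0 = (a:ℚ)/2) (hb : v 1 = (b:ℚ)/2) :
    Rp (transl v) (vz a b, mz 1 0 0 1) := by
  intro x
  funext i
  simp only [transl, Equiv.coe_addLeft, Pi.add_apply, actM, vz, mz, Fin.sum_univ_two]
  fin_cases i <;> simp [ha, hb]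

lemma Rp_negAt0 : Rp (negAt 0) (vz 0 0, mz (-1) 0 0 1) := by
  intro x
  funext i
  simp only [negAt, Function.Involutive.coe_toPerm, actM, vz, mz, Fin.sum_univ_two]
  fin_cases i <;> simp [Function.Involutive.toPerm] <;> ring

lemma Rp_negAt1 : Rp (negAt 1) (vz 0 0, mz 1 0 0 (-1)) := by
  intro x
  funext i
  simp only [negAt, Function.Involutive.coe_toPerm, actM, vz, mz, Fin.sum_univ_two]
  fin_cases i <;> simp [Function.Involutive.toPerm] <;> ring

lemma Rp_s1 : Rp s1 gS1 := by
  intro x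
  funext i
  simp only [s1, permV, Equiv.arrowCongr_apply, Equiv.coe_refl, Function.comp_apply,
    actM, gS1, vz, mz, Fin.sum_univ_two]
  fin_cases i <;> simp [Equiv.swap_apply_def] <;> ring

lemma Rp_s2 : Rp s2 gS2 := Rp_negAt1.cast (by decide)

lemma Rp_s0 : Rp s0 gS0 := by
  have := (Rp_transl (eV 0) 2 0 (by simp [eV, Pi.single]) (by simp [eV, Pi.single])).mul Rp_negAt0
  exact this.cast (by decide)

lemma Rp_rC : Rp rC (vz 0 0, mz 0 (-1) (-1) 0) :=
  ((Rp_negAt0.mul (Rp_negAt1.mul Rp_s1)).cast (by decide) : Rp (negAt 0 * (negAt 1 * s1)) _)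

lemma Rp_tau : Rp tau2 gTau := by
  exact ((Rp_transl (fun _ => 1/2) 1 1 (by norm_num) (by norm_num)).mul Rp_rC).cast (by decide)




/-! ## Evaluation of the length function via the model -/

lemma mem_PhiC2_iff (v : V2) : v ∈ PhiC2 ↔
    ((v 0 = 1 ∧ v 1 = -1) ∨ (v 0 = 1 ∧ v 1 = 1) ∨ (v 0 = 2 ∧ v 1 = 0) ∨ (v 0 = 0 ∧ v 1 = 2)) := by
  have h0 : eV 0 = bq 0 := by funext t; simp [eV, bq, Pi.single_apply, eq_comm]
  have h1 : eV 1 = bq 1 := by funext t; simp [eV, bq, Pi.single_apply, eq_comm]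
  simp only [PhiC2, Set.mem_insert_iff, Set.mem_singleton_iff, funext_iff, Fin.forall_fin_two,
    h0, h1, Pi.sub_apply, Pi.add_apply, bq]
  norm_num

def inPhiZ (x y : ℤ) : Prop :=
  (x = 1 ∧ y = -1) ∨ (x = 1 ∧ y = 1) ∨ (x = 2 ∧ y = 0) ∨ (x = 0 ∧ y = 2)

instance (x y : ℤ) : Decidable (inPhiZ x y) := by unfold inPhiZ; infer_instance

def tZ (g : MGM) (a b : ℤ) : ℤ :=
  if inPhiZ (g.2 0 0 * a + g.2 1 0 * b) (g.2 0 1 * a + g.2 1 1 * b)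
  then |g.1 0 * a + g.1 1 * b| else |g.1 0 * a + g.1 1 * b - 2|

def ellZ (g : MGM) : ℤ := tZ g 1 (-1) + tZ g 1 1 + tZ g 2 0 + tZ g 0 2

lemma lterm_eval {w : Wt2} {g : MGM} (h : Rp w g) (hinv : gmul g (ginv g) = gone)
    (α : V2) (a b : ℤ) (ha : α 0 = (a : ℚ)) (hb : α 1 = (b : ℚ)) :
    lterm w α = (tZ g a b : ℚ) / 2 := by
  have hi : Rp w⁻¹ (ginv g) := h.inv hinv
  have hl : ∀ i : Fin 2, linp w⁻¹ α i = ((g.2 0 i * a + g.2 1 i * b : ℤ) : ℚ) := by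
    intro i
    simp only [linp, hi α, hi 0, actM, ginv, Pi.sub_apply, Fin.sum_univ_two, Pi.zero_apply,
      mul_zero, add_zero, ha, hb]
    push_cast
    ring
  have hcond : (linp w⁻¹ α ∈ PhiC2) ↔
      inPhiZ (g.2 0 0 * a + g.2 1 0 * b) (g.2 0 1 * a + g.2 1 1 * b) := by
    rw [mem_PhiC2_iff, hl 0, hl 1, inPhiZ]
    exact_mod_cast Iff.rfl
  have hdot : dotp (w 0) α = ((g.1 0 * a + g.1 1 * b : ℤ) : ℚ) / 2 := by
    simp only [dotp, Fin.sum_univ_two, h 0, actM, Pi.zero_apply, mul_zero,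
      Finset.sum_const_zero, add_zero, ha, hb]
    push_cast
    ring
  rw [lterm, if_congr hcond rfl rfl, hdot, tZ]
  split_ifs with hc
  · push_cast [abs_div]
    norm_num
  · have : ((g.1 0 * a + g.1 1 * b : ℤ) : ℚ) / 2 - 1 = ((g.1 0 * a + g.1 1 * b - 2 : ℤ) : ℚ) / 2 := by
      push_cast; ring
    rw [this]
    push_cast [abs_div]
    norm_num

lemma ell_model {w : Wt2} {g : MGM} (h : Rp w g) (hinv : gmul g (ginv g) = gone) :
    ell w = (ellZ g : ℚ) / 2 := by
  have e1 : (eV 0 - eV 1) 0 = ((1 : ℤ) : ℚ) := by simp [eV, Pi.single_apply]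
  have e2 : (eV 0 - eV 1) 1 = ((-1 : ℤ) : ℚ) := by simp [eV, Pi.single_apply]
  have e3 : (eV 0 + eV 1) 0 = ((1 : ℤ) : ℚ) := by simp [eV, Pi.single_apply]
  have e4 : (eV 0 + eV 1) 1 = ((1 : ℤ) : ℚ) := by simp [eV, Pi.single_apply]
  have e5 : (eV 0 + eV 0) 0 = ((2 : ℤ) : ℚ) := by norm_num [eV, Pi.single_apply]
  have e6 : (eV 0 + eV 0) 1 = ((0 : ℤ) : ℚ) := by simp [eV, Pi.single_apply]
  have e7 : (eV 1 + eV 1) 0 = ((0 : ℤ) : ℚ) := by simp [eV, Pi.single_apply]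
  have e8 : (eV 1 + eV 1) 1 = ((2 : ℤ) : ℚ) := by norm_num [eV, Pi.single_apply]
  rw [ell, lterm_eval h hinv _ _ _ e1 e2, lterm_eval h hinv _ _ _ e3 e4,
    lterm_eval h hinv _ _ _ e5 e6, lterm_eval h hinv _ _ _ e7 e8, ellZ]
  push_cast
  ring




/-! ## Words in the generators -/

def genM : Fin 3 → MGM := fun k => if k = 0 then gS0 else if k = 1 then gS1 else gS2
def genW : Fin 3 → Wt2 := fun k => if k = 0 then s0 else if k = 1 then s1 else s2

def mword : List (Fin 3) → MGM
  | [] => gone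
  | k :: t => gmul (genM k) (mword t)

lemma Rp_gen : ∀ k, Rp (genW k) (genM k) := by
  intro k
  fin_cases k
  · exact Rp_s0
  · exact Rp_s1
  · exact Rp_s2

lemma St_iff (s : Wt2) : s ∈ St ↔ s = s0 ∨ s = s1 ∨ s = s2 := by
  simp [St, Set.mem_insert_iff, Set.mem_singleton_iff]

lemma code_of_word : ∀ l : List Wt2, (∀ s ∈ l, s ∈ St) → ∃ lc : List (Fin 3), l = lc.map genW := by
  intro l
  induction l with
  | nil => exact fun _ => ⟨[], rfl⟩
  | cons a t ih =>
    intro h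
    obtain ⟨lc, hlc⟩ := ih (fun s hs => h s (List.mem_cons_of_mem a hs))
    rcases (St_iff a).mp (h a List.mem_cons_self) with rfl | rfl | rfl
    · exact ⟨0 :: lc, by simp [genW, hlc]⟩
    · exact ⟨1 :: lc, by simp [genW, hlc]⟩
    · exact ⟨2 :: lc, by simp [genW, hlc]⟩

lemma Rp_mword : ∀ lc : List (Fin 3), Rp (lc.map genW).prod (mword lc) := by
  intro lc
  induction lc with
  | nil => exact Rp.one
  | cons k t ih =>
    rw [List.map_cons, List.prod_cons]
    exact (Rp_gen k).mul ih

/-! ## Integrality -/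

def IntP (v : V2) : Prop := (∃ n : ℤ, v 0 = n) ∧ (∃ n : ℤ, v 1 = n)

lemma IntP_gen (k : Fin 3) (v : V2) (h : IntP v) : IntP (genW k v) := by
  obtain ⟨⟨n, hn⟩, ⟨m, hm⟩⟩ := h
  fin_cases k
  · rw [show genW ⟨0, by omega⟩ = s0 from rfl, Rp_s0 v]
    constructor
    · exact ⟨1 - n, by simp [actM, gS0, vz, mz, Fin.sum_univ_two, hn, hm]; push_cast; ring⟩
    · exact ⟨m, by simp [actM, gS0, vz, mz, Fin.sum_univ_two, hn, hm]⟩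
  · rw [show genW ⟨1, by omega⟩ = s1 from rfl, Rp_s1 v]
    constructor
    · exact ⟨m, by simp [actM, gS1, vz, mz, Fin.sum_univ_two, hn, hm]⟩
    · exact ⟨n, by simp [actM, gS1, vz, mz, Fin.sum_univ_two, hn, hm]⟩
  · rw [show genW ⟨2, by omega⟩ = s2 from rfl, Rp_s2 v]
    constructor
    · exact ⟨n, by simp [actM, gS2, vz, mz, Fin.sum_univ_two, hn, hm]⟩
    · exact ⟨-m, by simp [actM, gS2, vz, mz, Fin.sum_univ_two, hn, hm]⟩

lemma IntP_word : ∀ lc : List (Fin 3), ∀ v, IntP v → IntP ((lc.map genW).prod v) := by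
  intro lc
  induction lc with
  | nil => intro v h; simpa using h
  | cons k t ih =>
    intro v h
    rw [List.map_cons, List.prod_cons, Equiv.Perm.mul_apply]
    exact IntP_gen k _ (ih v h)

lemma IntP_zero : IntP 0 := ⟨⟨0, by simp⟩, ⟨0, by simp⟩⟩

lemma half_not_int {c : ℚ} (h : c = 1/2 ∨ c = -1/2) : ¬ ∃ n : ℤ, c = n := by
  rintro ⟨n, hn⟩
  rcases h with h | h <;> rw [h] at hn
  · have h2 : ((2 * n : ℤ) : ℚ) = 1 := by push_cast; linarith
    have : (2 * n : ℤ) = 1 := by exact_mod_cast h2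
    omega
  · have h2 : ((2 * n : ℤ) : ℚ) = -1 := by push_cast; linarith
    have : (2 * n : ℤ) = -1 := by exact_mod_cast h2
    omega




/-! ## The subgroups W_J and W₀ -/

lemma PJ_mul : ∀ x y : Wt2, (x = 1 ∨ x = s0 ∨ x = s2 ∨ x = s0*s2) → (y = 1 ∨ y = s0 ∨ y = s2 ∨ y = s0*s2) → (x*y = 1 ∨ x*y = s0 ∨ x*y = s2 ∨ x*y = s0*s2) := by
  rintro x y (rfl|rfl|rfl|rfl) (rfl|rfl|rfl|rfl)
  · exact Or.inl (Rp.eq (Rp.one.mul Rp.one) Rp.one (by decide))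
  · exact Or.inr (Or.inl (Rp.eq (Rp.one.mul Rp_s0) Rp_s0 (by decide)))
  · exact Or.inr (Or.inr (Or.inl (Rp.eq (Rp.one.mul Rp_s2) Rp_s2 (by decide))))
  · exact Or.inr (Or.inr (Or.inr (Rp.eq (Rp.one.mul (Rp_s0.mul Rp_s2)) (Rp_s0.mul Rp_s2) (by decide))))
  · exact Or.inr (Or.inl (Rp.eq (Rp_s0.mul Rp.one) Rp_s0 (by decide)))
  · exact Or.inl (Rp.eq (Rp_s0.mul Rp_s0) Rp.one (by decide))
  · exact Or.inr (Or.inr (Or.inr (Rp.eq (Rp_s0.mul Rp_s2) (Rp_s0.mul Rp_s2) (by decide))))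
  · exact Or.inr (Or.inr (Or.inl (Rp.eq (Rp_s0.mul (Rp_s0.mul Rp_s2)) Rp_s2 (by decide))))
  · exact Or.inr (Or.inr (Or.inl (Rp.eq (Rp_s2.mul Rp.one) Rp_s2 (by decide))))
  · exact Or.inr (Or.inr (Or.inr (Rp.eq (Rp_s2.mul Rp_s0) (Rp_s0.mul Rp_s2) (by decide))))
  · exact Or.inl (Rp.eq (Rp_s2.mul Rp_s2) Rp.one (by decide))
  · exact Or.inr (Or.inl (Rp.eq (Rp_s2.mul (Rp_s0.mul Rp_s2)) Rp_s0 (by decide)))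
  · exact Or.inr (Or.inr (Or.inr (Rp.eq ((Rp_s0.mul Rp_s2).mul Rp.one) (Rp_s0.mul Rp_s2) (by decide))))
  · exact Or.inr (Or.inr (Or.inl (Rp.eq ((Rp_s0.mul Rp_s2).mul Rp_s0) Rp_s2 (by decide))))
  · exact Or.inr (Or.inl (Rp.eq ((Rp_s0.mul Rp_s2).mul Rp_s2) Rp_s0 (by decide)))
  · exact Or.inl (Rp.eq ((Rp_s0.mul Rp_s2).mul (Rp_s0.mul Rp_s2)) Rp.one (by decide))


lemma WJ_mem : ∀ x ∈ WJ {s0, s2}, x = 1 ∨ x = s0 ∨ x = s2 ∨ x = s0*s2 := by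
  intro x hx
  induction hx using Subgroup.closure_induction with
  | mem a ha =>
    rcases ha with rfl | ha
    · exact Or.inr (Or.inl rfl)
    · rcases ha with rfl
      exact Or.inr (Or.inr (Or.inl rfl))
  | one => exact Or.inl rfl
  | mul a b _ _ ha hb => exact PJ_mul a b ha hb
  | inv a _ ha =>
    rcases ha with rfl | rfl | rfl | rfl
    · exact Or.inl inv_one
    · exact Or.inr (Or.inl (inv_eq_of_mul_eq_one_right (Rp.eq (Rp_s0.mul Rp_s0) Rp.one (by decide))))
    · exact Or.inr (Or.inr (Or.inl (inv_eq_of_mul_eq_one_right (Rp.eq (Rp_s2.mul Rp_s2) Rp.one (by decide)))))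
    · exact Or.inr (Or.inr (Or.inr (inv_eq_of_mul_eq_one_right
        (Rp.eq ((Rp_s0.mul Rp_s2).mul (Rp_s0.mul Rp_s2)) Rp.one (by decide)))))

lemma s0_mem_WJ : s0 ∈ WJ {s0, s2} := Subgroup.subset_closure (Set.mem_insert _ _)
lemma s2_mem_WJ : s2 ∈ WJ {s0, s2} := Subgroup.subset_closure (Set.mem_insert_of_mem _ rfl)
lemma one_mem_WJ : (1 : Wt2) ∈ WJ {s0, s2} := one_mem _

/-- the half-integral vector (a/2, b/2) -/
def hv (a b : ℤ) : V2 := fun i => if i = 0 then (a : ℚ)/2 else (b : ℚ)/2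

def inM4 (v : V2) : Prop := v = hv 1 1 ∨ v = hv 1 (-1) ∨ v = hv (-1) 1 ∨ v = hv (-1) (-1)

lemma apply_hv {w : Wt2} {g : MGM} (h : Rp w g) (a b : ℤ) :
    w (hv a b) = hv (g.2 0 0 * a + g.2 0 1 * b + g.1 0) (g.2 1 0 * a + g.2 1 1 * b + g.1 1) := by
  rw [h (hv a b)]
  funext i
  fin_cases i <;>
    · simp only [actM, hv, Fin.sum_univ_two]
      norm_num
      push_cast
      ring

lemma s1_apply_M4 : ∀ v, inM4 v → inM4 (s1 v) := by
  rintro v (rfl | rfl | rfl | rfl) <;>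
    rw [apply_hv Rp_s1] <;> norm_num [gS1, vz, mz, inM4]

lemma s2_apply_M4 : ∀ v, inM4 v → inM4 (s2 v) := by
  rintro v (rfl | rfl | rfl | rfl) <;>
    rw [apply_hv Rp_s2] <;> norm_num [gS2, vz, mz, inM4]

lemma W0_M4 : ∀ x ∈ W0, ∀ v, inM4 v → inM4 (x v) ∧ inM4 (x⁻¹ v) := by
  intro x hx
  have hs1 : s1⁻¹ = s1 := inv_eq_of_mul_eq_one_right (Rp.eq (Rp_s1.mul Rp_s1) Rp.one (by decide))
  have hs2 : s2⁻¹ = s2 := inv_eq_of_mul_eq_one_right (Rp.eq (Rp_s2.mul Rp_s2) Rp.one (by decide))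
  induction hx using Subgroup.closure_induction with
  | mem a ha =>
    rcases ha with rfl | ha
    · exact fun v hv => ⟨s1_apply_M4 v hv, by rw [hs1]; exact s1_apply_M4 v hv⟩
    · rcases ha with rfl
      exact fun v hv => ⟨s2_apply_M4 v hv, by rw [hs2]; exact s2_apply_M4 v hv⟩
  | one => exact fun v hv => ⟨by simpa using hv, by simpa using hv⟩
  | mul a b _ _ ha hb =>
    intro v hv
    refine ⟨?_, ?_⟩
    · rw [Equiv.Perm.mul_apply]
      exact (ha _ (hb v hv).1).1
    · rw [mul_inv_rev, Equiv.Perm.mul_apply]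
      exact (hb _ (ha v hv).2).2
  | inv a _ ha =>
    intro v hv
    exact ⟨(ha v hv).2, by rw [inv_inv]; exact (ha v hv).1⟩

lemma mu_eq : (fun _ => 1/2 : V2) = hv 1 1 := by
  funext i
  fin_cases i <;> norm_num [hv]

lemma W0_mu : ∀ x ∈ W0, inM4 ((x : Wt2) (fun _ => 1/2 : V2)) := by
  intro x hx
  rw [mu_eq]
  exact (W0_M4 x hx _ (Or.inl rfl)).1




/-! ## The admissible set -/

def gU4 : List MGM := [mword [0,1,0], mword [0,2,1], mword [1,0,2], mword [2,1,2]]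

def admM : List MGM :=
  ([[],[0],[1],[2],[0,1],[0,2],[1,0],[1,2],[2,1],[0,1,0],[0,2,1],[1,0,2],[2,1,2]].map
    (fun l => gmul (mword l) gTau))

theorem D_adm : ∀ a b c : Fin 3, mword [a,b,c] ∈ gU4 →
    ∀ lc' ∈ [a,b,c].sublists, gmul (mword lc') gTau ∈ admM := by decide

/-- the modelled superset of Adm(μ) -/
def AdmS : Set Wt2 := {w | ∃ g ∈ admM, Rp w g}

lemma tau2_sq : tau2 * tau2 = 1 := Rp.eq (Rp_tau.mul Rp_tau) Rp.one (by decide)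

lemma tau2_inv : tau2⁻¹ = tau2 := inv_eq_of_mul_eq_one_right tau2_sq

/-- the four possible models of t^{xμ}·τ₂ -/
lemma Rp_transl_hv (a b : ℤ) : Rp (transl (hv a b)) (vz a b, mz 1 0 0 1) :=
  Rp_transl (hv a b) a b (by simp [hv]) (by simp [hv])

lemma Adm_sub : Adm (fun _ => 1/2 : V2) ⊆ AdmS := by
  rintro w ⟨x, hxW0, u, u', om, hom, hw, hw', l, l', ⟨hSt, hprodl, hlen⟩, hsub, hprod⟩
  have hM4 := W0_mu x hxW0
  obtain ⟨lc, rfl⟩ := code_of_word l hSt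
  rcases hom with rfl | rfl
  · -- om = 1 : impossible, t^{xμ} is not integral
    exfalso
    rw [mul_one] at hw'
    have hint : IntP ((lc.map genW).prod 0) := IntP_word lc 0 IntP_zero
    rw [hprodl, ← hw'] at hint
    have h0 : transl ((x : Wt2) (fun _ => 1/2 : V2)) 0 = (x : Wt2) (fun _ => 1/2 : V2) := by
      simp [transl]
    rw [h0] at hint
    rcases hM4 with h | h | h | h <;> rw [h] at hint <;>
      exact half_not_int (by norm_num [hv]) hint.1
  · -- om = τ₂
    have hu' : u' = transl ((x : Wt2) (fun _ => 1/2 : V2)) * tau2 := by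
      have := congrArg (· * tau2⁻¹) hw'
      simpa [mul_assoc, tau2_inv, tau2_sq] using this.symm
    -- identify the model of u' and show it lies in gU4
    have hmain : ∃ gc ∈ gU4, Rp u' gc ∧ ellZ gc = 6 := by
      rcases hM4 with h | h | h | h <;> rw [hu', h] <;>
        [ (exact ⟨mword [0,1,0], by simp [gU4], ((Rp_transl_hv 1 1).mul Rp_tau).cast (by decide), by decide⟩);
          (exact ⟨mword [0,2,1], by simp [gU4], ((Rp_transl_hv 1 (-1)).mul Rp_tau).cast (by decide), by decide⟩);
          (exact ⟨mword [1,0,2], by simp [gU4], ((Rp_transl_hv (-1) 1).mul Rp_tau).cast (by decide), by decide⟩);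
          (exact ⟨mword [2,1,2], by simp [gU4], ((Rp_transl_hv (-1) (-1)).mul Rp_tau).cast (by decide), by decide⟩)]
    obtain ⟨gc, hgc, hRgc, hellgc⟩ := hmain
    have hell : ell u' = 3 := by
      rw [ell_model hRgc (by
        rcases (by simpa [gU4] using hgc : gc = mword [0,1,0] ∨ gc = mword [0,2,1] ∨
          gc = mword [1,0,2] ∨ gc = mword [2,1,2]) with rfl | rfl | rfl | rfl <;> decide), hellgc]
      norm_num
    rw [hell] at hlen
    have hlen3 : (lc.map genW).length = 3 := by exact_mod_cast hlen
    rw [List.length_map] at hlen3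
    obtain ⟨a, b, c, rfl⟩ := List.length_eq_three.mp hlen3
    have hmw : mword [a,b,c] = gc := Rp.inj ((Rp_mword [a,b,c]).congr hprodl) hRgc
    obtain ⟨lc', hlcsub, rfl⟩ := List.sublist_map_iff.mp hsub
    have hmem := D_adm a b c (hmw ▸ hgc) lc' (List.mem_sublists.mpr hlcsub)
    refine ⟨gmul (mword lc') gTau, hmem, ?_⟩
    rw [hw, ← hprod]
    exact (Rp_mword lc').mul Rp_tau




/-! ## Computation of EO^J(μ) -/

def gT1 : MGM := gTau
def gT2 : MGM := gmul gS1 gTau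
def gT3 : MGM := gmul (gmul gS1 gS2) gTau
def gT4 : MGM := gmul (gmul gS1 gS0) gTau
def gT5 : MGM := gmul (gmul (gmul gS1 gS2) gS0) gTau

def tgtM : List MGM := [gT1, gT2, gT3, gT4, gT5]

lemma Rp_t1 : Rp tau2 gT1 := Rp_tau
lemma Rp_t2 : Rp (s1 * tau2) gT2 := Rp_s1.mul Rp_tau
lemma Rp_t3 : Rp (s1 * s2 * tau2) gT3 := (Rp_s1.mul Rp_s2).mul Rp_tau
lemma Rp_t4 : Rp (s1 * s0 * tau2) gT4 := (Rp_s1.mul Rp_s0).mul Rp_tau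
lemma Rp_t5 : Rp (s1 * s2 * s0 * tau2) gT5 := ((Rp_s1.mul Rp_s2).mul Rp_s0).mul Rp_tau

def CJml : Fin 4 → MGM := fun k =>
  if k = 0 then gone else if k = 1 then gS0 else if k = 2 then gS2 else gmul gS0 gS2

def CJL : List MGM := [gone, gS0, gS2, gmul gS0 gS2]

def zW : Fin 4 → Wt2 := fun k =>
  if k = 0 then 1 else if k = 1 then s0 else if k = 2 then s2 else s0*s2

lemma Rp_z : ∀ k, Rp (zW k) (CJml k) := by
  intro k
  fin_cases k
  · exact Rp.one
  · exact Rp_s0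
  · exact Rp_s2
  · exact Rp_s0.mul Rp_s2

lemma zW_WJ : ∀ k, zW k ∈ WJ {s0, s2} := by
  intro k
  fin_cases k
  · exact one_mem _
  · exact s0_mem_WJ
  · exact s2_mem_WJ
  · exact mul_mem s0_mem_WJ s2_mem_WJ

lemma modelW {x : Wt2} (h : x = 1 ∨ x = s0 ∨ x = s2 ∨ x = s0*s2) :
    ∃ gx ∈ CJL, Rp x gx := by
  rcases h with rfl | rfl | rfl | rfl
  · exact ⟨gone, by simp [CJL], Rp.one⟩
  · exact ⟨gS0, by simp [CJL], Rp_s0⟩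
  · exact ⟨gS2, by simp [CJL], Rp_s2⟩
  · exact ⟨gmul gS0 gS2, by simp [CJL], Rp_s0.mul Rp_s2⟩

set_option maxHeartbeats 4000000 in
theorem D1 : ∀ gx ∈ CJL, ∀ ga ∈ admM, ∀ gy ∈ CJL,
    gmul (gmul gx ga) gy ∈ tgtM ∨
    (gmul (gmul (gmul gx ga) gy) (ginv (gmul (gmul gx ga) gy)) = gone ∧
      ∃ k : Fin 4,
        gmul (gmul (CJml k) (gmul (gmul gx ga) gy))
            (ginv (gmul (CJml k) (gmul (gmul gx ga) gy))) = gone ∧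
        ellZ (gmul (CJml k) (gmul (gmul gx ga) gy)) < ellZ (gmul (gmul gx ga) gy)) := by
  decide

theorem D_min : ∀ gt ∈ tgtM, gmul gt (ginv gt) = gone ∧ ∀ k : Fin 4,
    gmul (gmul (CJml k) gt) (ginv (gmul (CJml k) gt)) = gone ∧
    ellZ gt ≤ ellZ (gmul (CJml k) gt) := by decide

lemma ell_le_of_model {w w' : Wt2} {g g' : MGM} (h : Rp w g) (h' : Rp w' g')
    (hg : gmul g (ginv g) = gone) (hg' : gmul g' (ginv g') = gone)
    (hle : ellZ g ≤ ellZ g') : ell w ≤ ell w' := by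
  rw [ell_model h hg, ell_model h' hg']
  have : (ellZ g : ℚ) ≤ (ellZ g' : ℚ) := by exact_mod_cast hle
  linarith

lemma minJ_T5 {w : Wt2} {gt : MGM} (h : Rp w gt) (hmem : gt ∈ tgtM) :
    w ∈ minJ {s0, s2} := by
  intro z hz
  obtain ⟨hinv, hk⟩ := D_min gt hmem
  rcases WJ_mem z hz with rfl | rfl | rfl | rfl
  · exact ell_le_of_model h ((Rp_z 0).mul h) hinv (hk 0).1 (hk 0).2
  · exact ell_le_of_model h ((Rp_z 1).mul h) hinv (hk 1).1 (hk 1).2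
  · exact ell_le_of_model h ((Rp_z 2).mul h) hinv (hk 2).1 (hk 2).2
  · exact ell_le_of_model h ((Rp_z 3).mul h) hinv (hk 3).1 (hk 3).2

lemma model_to_T5 {w : Wt2} {G : MGM} (h : Rp w G) (hG : G ∈ tgtM) :
    w ∈ ({tau2, s1 * tau2, s1 * s2 * tau2, s1 * s0 * tau2, s1 * s2 * s0 * tau2} : Set Wt2) := by
  rcases (by simpa [tgtM] using hG : G = gT1 ∨ G = gT2 ∨ G = gT3 ∨ G = gT4 ∨ G = gT5) with
    rfl | rfl | rfl | rfl | rfl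
  · exact Or.inl (Rp.eq h Rp_t1 rfl)
  · exact Or.inr (Or.inl (Rp.eq h Rp_t2 rfl))
  · exact Or.inr (Or.inr (Or.inl (Rp.eq h Rp_t3 rfl)))
  · exact Or.inr (Or.inr (Or.inr (Or.inl (Rp.eq h Rp_t4 rfl))))
  · exact Or.inr (Or.inr (Or.inr (Or.inr (Rp.eq h Rp_t5 rfl))))

lemma s1_W0 : s1 ∈ W0 := Subgroup.subset_closure (Set.mem_insert _ _)
lemma s2_W0 : s2 ∈ W0 := Subgroup.subset_closure (Set.mem_insert_of_mem _ rfl)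

/-- every subword of [s₁,s₀,s₂] (times τ₂) is admissible -/
lemma ble_target (u : Wt2) (l' : List Wt2) (hsub : l'.Sublist [s1, s0, s2])
    (hprod : l'.prod = u) : (u * tau2) ∈ Adm (fun _ => 1/2 : V2) := by
  have hx : (s1*s2*s1 : Wt2) (fun _ => 1/2) = hv (-1) 1 := by
    rw [((Rp_s1.mul Rp_s2).mul Rp_s1) (fun _ => 1/2)]
    funext i
    fin_cases i <;> norm_num [actM, gmul, gS1, gS2, vz, mz, Fin.sum_univ_two, hv]
  refine ⟨s1*s2*s1, mul_mem (mul_mem s1_W0 s2_W0) s1_W0,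
    u, transl (hv (-1) 1) * tau2, tau2, Or.inr rfl, rfl, ?_, [s1, s0, s2], l',
    ⟨?_, ?_, ?_⟩, hsub, hprod⟩
  · rw [hx, mul_assoc, tau2_sq, mul_one]
  · intro s hs
    fin_cases hs
    · exact Or.inr (Or.inl rfl)
    · exact Or.inl rfl
    · exact Or.inr (Or.inr rfl)
  · have : ([s1, s0, s2] : List Wt2).prod = s1 * (s0 * s2) := by
      simp [List.prod_cons, mul_assoc]
    rw [this]
    exact Rp.eq (Rp_s1.mul (Rp_s0.mul Rp_s2)) ((Rp_transl_hv (-1) 1).mul Rp_tau) (by decide)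
  · rw [ell_model ((Rp_transl_hv (-1) 1).mul Rp_tau) (by decide)]
    rw [show ellZ (gmul (vz (-1) 1, mz 1 0 0 1) gTau) = 6 from by decide]
    norm_num

lemma EO_eq : EO {s0, s2} (fun _ => 1/2 : V2) =
    ({tau2, s1 * tau2, s1 * s2 * tau2, s1 * s0 * tau2, s1 * s2 * s0 * tau2} : Set Wt2) := by
  apply Set.Subset.antisymm
  · rintro w ⟨⟨x, hx, y, hy, a, ha, rfl⟩, hmin⟩
    obtain ⟨gx, hgx, hRx⟩ := modelW (WJ_mem x hx)
    obtain ⟨gy, hgy, hRy⟩ := modelW (WJ_mem y hy)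
    obtain ⟨ga, hga, hRa⟩ := Adm_sub ha
    have hRw : Rp (x * a * y) (gmul (gmul gx ga) gy) := (hRx.mul hRa).mul hRy
    rcases D1 gx hgx ga hga gy hgy with hT | ⟨hinv, k, hkinv, hlt⟩
    · exact model_to_T5 hRw hT
    · exfalso
      have hle := hmin (zW k) (zW_WJ k)
      rw [ell_model hRw hinv, ell_model ((Rp_z k).mul hRw) hkinv] at hle
      have : (ellZ (gmul (CJml k) (gmul (gmul gx ga) gy)) : ℚ) <
          (ellZ (gmul (gmul gx ga) gy) : ℚ) := by exact_mod_cast hlt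
      linarith
  · intro w hw
    have mem_of : ∀ (t u : Wt2) (gt : MGM), Rp t gt → gt ∈ tgtM →
        t = u * tau2 → (u * tau2) ∈ Adm (fun _ => 1/2 : V2) →
        t ∈ EO {s0, s2} (fun _ => 1/2 : V2) := by
      intro t u gt hRt hmem ht hAdm
      refine ⟨⟨1, one_mem _, 1, one_mem _, t, by rw [ht]; exact hAdm, by simp⟩, minJ_T5 hRt hmem⟩
    rcases hw with rfl | rfl | rfl | rfl | rfl
    · exact mem_of tau2 1 gT1 Rp_t1 (by simp [tgtM]) (one_mul tau2).symm
        (ble_target 1 [] (List.nil_sublist _) rfl)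
    · exact mem_of (s1 * tau2) s1 gT2 Rp_t2 (by simp [tgtM]) rfl
        (ble_target s1 [s1] ((List.nil_sublist [s0, s2]).cons₂ s1) (List.prod_singleton))
    · exact mem_of (s1 * s2 * tau2) (s1 * s2) gT3 Rp_t3 (by simp [tgtM]) rfl
        (ble_target (s1 * s2) [s1, s2]
          (((List.Sublist.refl [s2]).cons s0).cons₂ s1) (by simp [List.prod_cons]))
    · exact mem_of (s1 * s0 * tau2) (s1 * s0) gT4 Rp_t4 (by simp [tgtM]) rfl
        (ble_target (s1 * s0) [s1, s0]
          (((List.nil_sublist [s2]).cons₂ s0).cons₂ s1) (by simp [List.prod_cons]))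
    · refine mem_of (s1 * s2 * s0 * tau2) (s1 * (s0 * s2)) gT5 Rp_t5 (by simp [tgtM]) ?_
        (ble_target (s1 * (s0 * s2)) [s1, s0, s2] (List.Sublist.refl _) (by simp [List.prod_cons, mul_assoc]))
      exact Rp.eq Rp_t5 ((Rp_s1.mul (Rp_s0.mul Rp_s2)).mul Rp_tau) (by decide)




/-! ## suppsig computations -/

lemma conj_tau_s0 : (MulAut.conj tau2) s0 = s2 := by
  rw [MulAut.conj_apply, tau2_inv]
  exact Rp.eq ((Rp_tau.mul Rp_s0).mul Rp_tau) Rp_s2 (by decide)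

lemma conj_tau_s1 : (MulAut.conj tau2) s1 = s1 := by
  rw [MulAut.conj_apply, tau2_inv]
  exact Rp.eq ((Rp_tau.mul Rp_s1).mul Rp_tau) Rp_s1 (by decide)

lemma conj_tau_s2 : (MulAut.conj tau2) s2 = s0 := by
  rw [MulAut.conj_apply, tau2_inv]
  exact Rp.eq ((Rp_tau.mul Rp_s2).mul Rp_tau) Rp_s0 (by decide)

lemma deltaW_one_eq : deltaW 1 (1 : Wt2) = 1 := by
  simp [deltaW]

lemma deltaW_tau_eq : deltaW 1 tau2 = MulAut.conj tau2 := by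
  simp [deltaW]

lemma tau2_zpow (m : ℤ) : tau2 ^ m = 1 ∨ tau2 ^ m = tau2 := by
  have h2 : tau2 ^ (2 : ℤ) = 1 := by
    rw [zpow_two]
    exact tau2_sq
  rcases Int.even_or_odd m with ⟨r, hr⟩ | ⟨r, hr⟩
  · left
    rw [show m = 2 * r by omega, zpow_mul, h2, one_zpow]
  · right
    rw [show m = 2 * r + 1 by omega, zpow_add, zpow_mul, h2, one_zpow, zpow_one, one_mul]

lemma delta_tau_pow (m : ℤ) : (deltaW 1 tau2) ^ m = 1 ∨ (deltaW 1 tau2) ^ m = MulAut.conj tau2 := by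
  rw [deltaW_tau_eq, ← map_zpow (MulAut.conj : Wt2 →* MulAut Wt2)]
  rcases tau2_zpow m with h | h <;> rw [h]
  · left; exact map_one _
  · right; rfl

lemma suppsig_sub_St (w : Wt2) : suppsig 1 w ⊆ St := by
  rintro s ⟨u, om, l, hom, hw, ⟨hSt, hprod, hlen⟩, s₀, hs₀, m, hm⟩
  have h₀ : s₀ ∈ St := hSt s₀ hs₀
  rcases hom with rfl | rfl
  · rw [hm, deltaW_one_eq, one_zpow]
    exact h₀
  · rcases delta_tau_pow m with h | h <;> rw [hm, h]
    · exact h₀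
    · rcases (St_iff s₀).mp h₀ with rfl | rfl | rfl
      · rw [conj_tau_s0]; exact Or.inr (Or.inr rfl)
      · rw [conj_tau_s1]; exact Or.inr (Or.inl rfl)
      · rw [conj_tau_s2]; exact Or.inl rfl

lemma prod_ne_half {t : Wt2} (h : t 0 0 = 1/2 ∨ t 0 0 = -1/2) :
    ∀ l : List Wt2, (∀ s ∈ l, s ∈ St) → l.prod ≠ t := by
  intro l hSt heq
  obtain ⟨lc, rfl⟩ := code_of_word l hSt
  have hint := (IntP_word lc 0 IntP_zero).1
  rw [heq] at hint
  exact half_not_int h hint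

/-! ell values and reduced words -/

lemma ell_one_val : ell (1 : Wt2) = 0 := by
  rw [ell_model Rp.one (by decide), show ellZ gone = 0 from by decide]
  norm_num

lemma ell_s1_val : ell s1 = 1 := by
  rw [ell_model Rp_s1 (by decide), show ellZ gS1 = 2 from by decide]
  norm_num

lemma ell_s1s2_val : ell (s1 * s2) = 2 := by
  rw [ell_model (Rp_s1.mul Rp_s2) (by decide),
    show ellZ (gmul gS1 gS2) = 4 from by decide]
  norm_num

lemma ell_s1s0_val : ell (s1 * s0) = 2 := by
  rw [ell_model (Rp_s1.mul Rp_s0) (by decide),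
    show ellZ (gmul gS1 gS0) = 4 from by decide]
  norm_num

lemma ell_s1s0s2_val : ell (s1 * (s0 * s2)) = 3 := by
  rw [ell_model (Rp_s1.mul (Rp_s0.mul Rp_s2)) (by decide),
    show ellZ (gmul gS1 (gmul gS0 gS2)) = 6 from by decide]
  norm_num

lemma IsRed_s1 : IsRed s1 [s1] :=
  ⟨by intro s hs; fin_cases hs; exact Or.inr (Or.inl rfl),
   List.prod_singleton, by rw [ell_s1_val]; norm_num⟩

lemma IsRed_s1s2 : IsRed (s1 * s2) [s1, s2] :=
  ⟨by intro s hs; fin_cases hs; exacts [Or.inr (Or.inl rfl), Or.inr (Or.inr rfl)],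
   by simp [List.prod_cons], by rw [ell_s1s2_val]; norm_num⟩

lemma IsRed_s1s0 : IsRed (s1 * s0) [s1, s0] :=
  ⟨by intro s hs; fin_cases hs; exacts [Or.inr (Or.inl rfl), Or.inl rfl],
   by simp [List.prod_cons], by rw [ell_s1s0_val]; norm_num⟩

lemma IsRed_s1s0s2 : IsRed (s1 * (s0 * s2)) [s1, s0, s2] :=
  ⟨by intro s hs; fin_cases hs; exacts [Or.inr (Or.inl rfl), Or.inl rfl, Or.inr (Or.inr rfl)],
   by simp [List.prod_cons, mul_assoc], by rw [ell_s1s0s2_val]; norm_num⟩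

lemma mem_suppsig {w u : Wt2} {l : List Wt2} (om : Wt2) (hom : om ∈ Om) (hw : w = u * om)
    (hred : IsRed u l) (s₀ : Wt2) (hs₀ : s₀ ∈ l) (m : ℤ) {s : Wt2}
    (hs : s = ((deltaW 1 om) ^ m) s₀) : s ∈ suppsig 1 w :=
  ⟨u, om, l, hom, hw, hred, s₀, hs₀, m, hs⟩

lemma suppsig_tau : suppsig 1 tau2 = ∅ := by
  rw [Set.eq_empty_iff_forall_notMem]
  rintro s ⟨u, om, l, hom, hw, ⟨hSt, hprod, hlen⟩, s₀, hs₀, m, hm⟩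
  rcases hom with rfl | rfl
  · rw [mul_one] at hw
    refine prod_ne_half (Or.inl ?_) l hSt (by rw [hprod, ← hw])
    rw [Rp_tau 0]
    norm_num [actM, gTau, vz, mz, Fin.sum_univ_two]
  · have hu : u = 1 := mul_right_cancel (b := tau2) (by rw [one_mul, ← hw])
    rw [hu, ell_one_val] at hlen
    have : l.length = 0 := by exact_mod_cast hlen
    rw [List.length_eq_zero_iff.mp this] at hs₀
    exact List.not_mem_nil hs₀

lemma suppsig_s1tau : suppsig 1 (s1 * tau2) = {s1} := by
  apply Set.Subset.antisymm
  · rintro s ⟨u, om, l, hom, hw, ⟨hSt, hprod, hlen⟩, s₀, hs₀, m, hm⟩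
    rcases hom with rfl | rfl
    · rw [mul_one] at hw
      exfalso
      refine prod_ne_half (Or.inl ?_) l hSt (by rw [hprod, ← hw])
      rw [Rp_t2 0]
      norm_num [actM, gT2, gmul, gS1, gTau, vz, mz, Fin.sum_univ_two]
    · have hu : u = s1 := mul_right_cancel (b := tau2) hw.symm
      rw [hu, ell_s1_val] at hlen
      have h1 : l.length = 1 := by exact_mod_cast hlen
      obtain ⟨t, rfl⟩ := List.length_eq_one_iff.mp h1
      have ht : t = s1 := by
        have := hprod
        rw [List.prod_singleton, hu] at this
        exact this
      have hs1 : s₀ = s1 := by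
        rcases List.mem_singleton.mp hs₀ with rfl
        exact ht
      rw [hs1] at hm
      rcases delta_tau_pow m with h | h <;> rw [h] at hm
      · exact hm ▸ rfl
      · rw [conj_tau_s1] at hm
        exact hm ▸ rfl
  · intro s hs
    rcases hs with rfl
    exact mem_suppsig tau2 (Or.inr rfl) rfl IsRed_s1 s1 (List.mem_singleton.mpr rfl) 0 (by simp)

lemma suppsig_w2 : suppsig 1 (s1 * s2 * tau2) = St := by
  apply Set.Subset.antisymm (suppsig_sub_St _)
  intro s hs
  rcases (St_iff s).mp hs with rfl | rfl | rfl
  · refine mem_suppsig tau2 (Or.inr rfl) rfl IsRed_s1s2 s2 (by simp) 1 ?_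
    rw [zpow_one, deltaW_tau_eq, conj_tau_s2]
  · exact mem_suppsig tau2 (Or.inr rfl) rfl IsRed_s1s2 s1 (by simp) 0 (by simp)
  · exact mem_suppsig tau2 (Or.inr rfl) rfl IsRed_s1s2 s2 (by simp) 0 (by simp)

lemma suppsig_w3 : suppsig 1 (s1 * s0 * tau2) = St := by
  apply Set.Subset.antisymm (suppsig_sub_St _)
  intro s hs
  rcases (St_iff s).mp hs with rfl | rfl | rfl
  · exact mem_suppsig tau2 (Or.inr rfl) rfl IsRed_s1s0 s0 (by simp) 0 (by simp)
  · exact mem_suppsig tau2 (Or.inr rfl) rfl IsRed_s1s0 s1 (by simp) 0 (by simp)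
  · refine mem_suppsig tau2 (Or.inr rfl) rfl IsRed_s1s0 s0 (by simp) 1 ?_
    rw [zpow_one, deltaW_tau_eq, conj_tau_s0]

lemma w4_factor : s1 * s2 * s0 * tau2 = (s1 * (s0 * s2)) * tau2 :=
  Rp.eq Rp_t5 ((Rp_s1.mul (Rp_s0.mul Rp_s2)).mul Rp_tau) (by decide)

lemma suppsig_w4 : suppsig 1 (s1 * s2 * s0 * tau2) = St := by
  apply Set.Subset.antisymm (suppsig_sub_St _)
  intro s hs
  rcases (St_iff s).mp hs with rfl | rfl | rfl
  · exact mem_suppsig tau2 (Or.inr rfl) w4_factor IsRed_s1s0s2 s0 (by simp) 0 (by simp)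
  · exact mem_suppsig tau2 (Or.inr rfl) w4_factor IsRed_s1s0s2 s1 (by simp) 0 (by simp)
  · exact mem_suppsig tau2 (Or.inr rfl) w4_factor IsRed_s1s0s2 s2 (by simp) 0 (by simp)

/-! orbit counts -/

lemma orbCount_empty (δ : MulAut Wt2) : orbCount δ ∅ = 0 := by
  rw [orbCount, show {O : Set Wt2 | ∃ s ∈ (∅ : Set Wt2), O = {t | ∃ m : ℤ, (δ ^ m) s = t}} = ∅
    from by simp]
  exact Set.ncard_empty _

lemma orbCount_single (δ : MulAut Wt2) (s : Wt2) : orbCount δ {s} = 1 := by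
  rw [orbCount, show {O : Set Wt2 | ∃ t ∈ ({s} : Set Wt2), O = {u | ∃ m : ℤ, (δ ^ m) t = u}} =
    {{u | ∃ m : ℤ, (δ ^ m) s = u}} from by ext O; simp]
  exact Set.ncard_singleton _

/-! ## EO^J_{σ,cox} -/

lemma s1_ne_s0 : s1 ≠ s0 := Rp.ne Rp_s1 Rp_s0 (by decide)

lemma EOcox_eq : EOcox 1 {s0, s2} (fun _ => 1/2 : V2) = ({tau2, s1 * tau2} : Set Wt2) := by
  apply Set.Subset.antisymm
  · rintro w ⟨hEO, hne, hcox⟩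
    rw [EO_eq] at hEO
    rcases hEO with rfl | rfl | rfl | rfl | rfl
    · exact Or.inl rfl
    · exact Or.inr rfl
    · exact absurd suppsig_w2 hne
    · exact absurd suppsig_w3 hne
    · exact absurd suppsig_w4 hne
  · intro w hw
    rcases hw with rfl | rfl
    · refine ⟨EO_eq ▸ Or.inl rfl, ?_, 1, tau2, Or.inr rfl, (one_mul tau2).symm, ?_⟩
      · rw [suppsig_tau]
        intro h
        have : s1 ∈ (∅ : Set Wt2) := h ▸ Or.inr (Or.inl rfl)
        exact this
      · rw [suppsig_tau, orbCount_empty, ell_one_val]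
        norm_num
    · refine ⟨EO_eq ▸ Or.inr (Or.inl rfl), ?_, s1, tau2, Or.inr rfl, rfl, ?_⟩
      · rw [suppsig_s1tau]
        intro h
        have : s0 ∈ ({s1} : Set Wt2) := h.symm ▸ (Or.inl rfl : s0 ∈ St)
        exact s1_ne_s0 this.symm
      · rw [suppsig_s1tau, orbCount_single, ell_s1_val]
        norm_num




/-! ## Straightness -/

lemma sigmaProd_one (w : Wt2) (m : ℕ) : sigmaProd 1 w m = w ^ m := by
  rw [sigmaProd]
  have h : ((List.range m).map fun k => (((1 : MulAut Wt2)) ^ k) w) = List.replicate m w := by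
    rw [show (fun k => (((1 : MulAut Wt2)) ^ k) w) = fun _ => w from
      funext fun k => by rw [one_pow]; rfl]
    rw [List.map_const', List.length_range]
  rw [h, List.prod_replicate]

def TrQ2 (q : ℕ) : MGM := (vz (-2*(q:ℤ)) 0, mz 1 0 0 1)
def GO2 (q : ℕ) : MGM := (vz (-2*(q:ℤ)-1) 1, mz 1 0 0 (-1))
def TrQ3 (q : ℕ) : MGM := (vz 0 (2*(q:ℤ)), mz 1 0 0 1)
def GO3 (q : ℕ) : MGM := (vz 1 (2*(q:ℤ)+1), mz (-1) 0 0 1)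
def TrQ4 (q : ℕ) : MGM := (vz (-(q:ℤ)) (q:ℤ), mz 1 0 0 1)

lemma gmul_eq_of (g h k : MGM) (h1 : ∀ i, g.1 i + g.2 i 0 * h.1 0 + g.2 i 1 * h.1 1 = k.1 i)
    (h2 : ∀ i j, g.2 i 0 * h.2 0 j + g.2 i 1 * h.2 1 j = k.2 i j) : gmul g h = k := by
  apply Prod.ext
  · funext i
    rw [← h1 i]
    simp [gmul, Fin.sum_univ_two]
    ring
  · funext i j
    rw [← h2 i j]
    simp [gmul, Fin.sum_univ_two]

lemma Rp_w2sq : Rp ((s1 * s2 * tau2) ^ 2) (TrQ2 1) := by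
  rw [pow_two]
  exact (Rp_t3.mul Rp_t3).cast (by decide)

lemma Rp_w2_even : ∀ q, Rp ((s1 * s2 * tau2) ^ (2 * q)) (TrQ2 q) := by
  intro q
  induction q with
  | zero => rw [Nat.mul_zero, pow_zero]; exact Rp.one.cast (by decide)
  | succ n ih =>
    rw [show 2 * (n + 1) = 2 * n + 2 from by ring, pow_add]
    refine (ih.mul Rp_w2sq).cast (gmul_eq_of _ _ _ ?_ ?_)
    · intro i
      fin_cases i <;> simp [TrQ2, vz, mz] <;> push_cast <;> ring
    · intro i j
      fin_cases i <;> fin_cases j <;> simp [TrQ2, vz, mz]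

lemma Rp_w2_odd (q : ℕ) : Rp ((s1 * s2 * tau2) ^ (2 * q + 1)) (GO2 q) := by
  rw [pow_succ]
  refine ((Rp_w2_even q).mul Rp_t3).cast (gmul_eq_of _ _ _ ?_ ?_)
  · intro i
    fin_cases i <;> simp [TrQ2, GO2, gT3, gTau, gS1, gS2, gmul, vz, mz, Fin.sum_univ_two] <;>
      push_cast <;> ring
  · intro i j
    fin_cases i <;> fin_cases j <;>
      simp [TrQ2, GO2, gT3, gTau, gS1, gS2, gmul, vz, mz, Fin.sum_univ_two]

lemma hinv_TrQ2 (q : ℕ) : gmul (TrQ2 q) (ginv (TrQ2 q)) = gone := by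
  refine gmul_eq_of _ _ _ ?_ ?_
  · intro i
    fin_cases i <;> simp [TrQ2, ginv, gone, vz, mz, Fin.sum_univ_two] <;> ring
  · intro i j
    fin_cases i <;> fin_cases j <;> simp [TrQ2, ginv, gone, vz, mz, Fin.sum_univ_two]

lemma ellZ_GO2 (q : ℕ) : ellZ (GO2 q) = 8 * q + 4 := by
  simp only [ellZ, tZ, GO2, vz, mz, inPhiZ]
  norm_num
  have a1 : |-(2*(q:ℤ)) - 1 + -1| = 2*q + 2 := by
    rw [show -(2*(q:ℤ)) - 1 + -1 = -(2*q+2) from by ring, abs_neg, abs_of_nonneg (by positivity)]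
  have a2 : |2*(q:ℤ)| = 2*q := abs_of_nonneg (by positivity)
  have a3 : |(-(2*(q:ℤ)) - 1) * 2| = 4*q + 2 := by
    rw [show (-(2*(q:ℤ)) - 1) * 2 = -(4*q+2) from by ring, abs_neg, abs_of_nonneg (by positivity)]
  rw [show |-(2*(q:ℤ)) - 1| = 2*q+1 from by
    rw [show -(2*(q:ℤ)) - 1 = -(2*q+1) from by ring, abs_neg, abs_of_nonneg (by positivity)]]
  ring_nf
  rw [abs_of_nonpos (a := -2 - (q:ℤ)*2) (by omega)]
  ring

lemma hinv_GO2 (q : ℕ) : gmul (GO2 q) (ginv (GO2 q)) = gone := by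
  refine gmul_eq_of _ _ _ ?_ ?_
  · intro i
    fin_cases i <;> simp [GO2, ginv, gone, vz, mz, Fin.sum_univ_two] <;> ring
  · intro i j
    fin_cases i <;> fin_cases j <;> simp [GO2, ginv, gone, vz, mz, Fin.sum_univ_two]

lemma ellZ_TrQ2 (q : ℕ) : ellZ (TrQ2 q) = 8 * q := by
  have h : ∀ a : ℤ, 0 ≤ a → |(-a)| = a := fun a ha => by rw [abs_neg, abs_of_nonneg ha]
  simp only [ellZ, tZ, TrQ2, vz, mz, inPhiZ]
  norm_num
  have h1 : |2*(q:ℤ)| = 2*q := abs_of_nonneg (by positivity)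
  have h2 : |2*(q:ℤ)*2| = 4*q := by
    rw [show 2*(q:ℤ)*2 = 4*q from by ring]
    exact abs_of_nonneg (by positivity)
  ring



lemma Rp_w3sq : Rp ((s1 * s0 * tau2) ^ 2) (TrQ3 1) := by
  rw [pow_two]
  exact (Rp_t4.mul Rp_t4).cast (by decide)

lemma Rp_w3_even : ∀ q, Rp ((s1 * s0 * tau2) ^ (2 * q)) (TrQ3 q) := by
  intro q
  induction q with
  | zero => rw [Nat.mul_zero, pow_zero]; exact Rp.one.cast (by decide)
  | succ n ih =>
    rw [show 2 * (n + 1) = 2 * n + 2 from by ring, pow_add]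
    refine (ih.mul Rp_w3sq).cast (gmul_eq_of _ _ _ ?_ ?_)
    · intro i
      fin_cases i <;> simp [TrQ3, vz, mz] <;> push_cast <;> ring
    · intro i j
      fin_cases i <;> fin_cases j <;> simp [TrQ3, vz, mz]

lemma Rp_w3_odd (q : ℕ) : Rp ((s1 * s0 * tau2) ^ (2 * q + 1)) (GO3 q) := by
  rw [pow_succ]
  refine ((Rp_w3_even q).mul Rp_t4).cast (gmul_eq_of _ _ _ ?_ ?_)
  · intro i
    fin_cases i <;> simp [TrQ3, GO3, gT4, gTau, gS1, gS0, gmul, vz, mz, Fin.sum_univ_two] <;>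
      push_cast <;> ring
  · intro i j
    fin_cases i <;> fin_cases j <;>
      simp [TrQ3, GO3, gT4, gTau, gS1, gS0, gmul, vz, mz, Fin.sum_univ_two]

lemma hinv_TrQ3 (q : ℕ) : gmul (TrQ3 q) (ginv (TrQ3 q)) = gone := by
  refine gmul_eq_of _ _ _ ?_ ?_
  · intro i
    fin_cases i <;> simp [TrQ3, ginv, gone, vz, mz, Fin.sum_univ_two] <;> ring
  · intro i j
    fin_cases i <;> fin_cases j <;> simp [TrQ3, ginv, gone, vz, mz, Fin.sum_univ_two]

lemma hinv_GO3 (q : ℕ) : gmul (GO3 q) (ginv (GO3 q)) = gone := by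
  refine gmul_eq_of _ _ _ ?_ ?_
  · intro i
    fin_cases i <;> simp [GO3, ginv, gone, vz, mz, Fin.sum_univ_two] <;> ring
  · intro i j
    fin_cases i <;> fin_cases j <;> simp [GO3, ginv, gone, vz, mz, Fin.sum_univ_two]

lemma ellZ_TrQ3 (q : ℕ) : ellZ (TrQ3 q) = 8 * q := by
  simp only [ellZ, tZ, TrQ3, vz, mz, inPhiZ]
  norm_num
  have a2 : |2*(q:ℤ)| = 2*q := abs_of_nonneg (by positivity)
  have a3 : |2*(q:ℤ)*2| = 4*q := by
    rw [show 2*(q:ℤ)*2 = 4*q from by ring]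
    exact abs_of_nonneg (by positivity)
  ring

lemma ellZ_GO3 (q : ℕ) : ellZ (GO3 q) = 8 * q + 4 := by
  simp only [ellZ, tZ, GO3, vz, mz, inPhiZ]
  norm_num
  have a1 : |-(2*(q:ℤ)) - 2| = 2*q + 2 := by
    rw [show -(2*(q:ℤ)) - 2 = -(2*q+2) from by ring, abs_neg, abs_of_nonneg (by positivity)]
  have a2 : |1 + (2*(q:ℤ)+1) - 2| = 2*q := by
    rw [show 1 + (2*(q:ℤ)+1) - 2 = 2*q from by ring]
    exact abs_of_nonneg (by positivity)
  have a3 : |(2*(q:ℤ)+1)*2| = 4*q + 2 := by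
    rw [show (2*(q:ℤ)+1)*2 = 4*q+2 from by ring]
    exact abs_of_nonneg (by positivity)
  rw [show |2*(q:ℤ)+1| = 2*q+1 from abs_of_nonneg (by positivity)]
  ring_nf
  rw [abs_of_nonpos (a := -2 - (q:ℤ)*2) (by omega), abs_of_nonneg (a := (q:ℤ)*2) (by omega)]
  ring

lemma Rp_w4_pow : ∀ m, Rp ((s1 * s2 * s0 * tau2) ^ m) (TrQ4 m) := by
  intro m
  induction m with
  | zero => rw [pow_zero]; exact Rp.one.cast (by decide)
  | succ n ih =>
    rw [pow_succ]
    refine (ih.mul Rp_t5).cast (gmul_eq_of _ _ _ ?_ ?_)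
    · intro i
      fin_cases i <;> simp [TrQ4, gT5, gTau, gS1, gS2, gS0, gmul, vz, mz, Fin.sum_univ_two] <;>
        push_cast <;> ring
    · intro i j
      fin_cases i <;> fin_cases j <;>
        simp [TrQ4, gT5, gTau, gS1, gS2, gS0, gmul, vz, mz, Fin.sum_univ_two]

lemma hinv_TrQ4 (q : ℕ) : gmul (TrQ4 q) (ginv (TrQ4 q)) = gone := by
  refine gmul_eq_of _ _ _ ?_ ?_
  · intro i
    fin_cases i <;> simp [TrQ4, ginv, gone, vz, mz, Fin.sum_univ_two] <;> ring
  · intro i j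
    fin_cases i <;> fin_cases j <;> simp [TrQ4, ginv, gone, vz, mz, Fin.sum_univ_two]

lemma ellZ_TrQ4 (q : ℕ) : ellZ (TrQ4 q) = 6 * q := by
  simp only [ellZ, tZ, TrQ4, vz, mz, inPhiZ]
  norm_num
  have a1 : |-(q:ℤ) + -(q:ℤ)| = 2*q := by
    rw [show -(q:ℤ) + -(q:ℤ) = -(2*q) from by ring, abs_neg, abs_of_nonneg (by positivity)]
  have a2 : |(q:ℤ)*2| = 2*q := by
    rw [show (q:ℤ)*2 = 2*q from by ring]
    exact abs_of_nonneg (by positivity)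
  ring_nf
  rw [abs_neg, abs_of_nonneg (a := (q:ℤ)*2) (by omega)]
  ring

lemma ell_w2_val : ell (s1 * s2 * tau2) = 2 := by
  rw [ell_model Rp_t3 (by decide), show ellZ gT3 = 4 from by decide]; norm_num

lemma ell_w3_val : ell (s1 * s0 * tau2) = 2 := by
  rw [ell_model Rp_t4 (by decide), show ellZ gT4 = 4 from by decide]; norm_num

lemma ell_w4_val : ell (s1 * s2 * s0 * tau2) = 3 := by
  rw [ell_model Rp_t5 (by decide), show ellZ gT5 = 6 from by decide]; norm_num

lemma straight_w2 : IsStraight 1 (s1 * s2 * tau2) := by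
  intro m _
  rw [sigmaProd_one, ell_w2_val]
  rcases Nat.even_or_odd m with ⟨q, hq⟩ | ⟨q, hq⟩
  · rw [show m = 2*q from by omega, ell_model (Rp_w2_even q) (hinv_TrQ2 q), ellZ_TrQ2]
    push_cast; ring
  · rw [show m = 2*q+1 from by omega, ell_model (Rp_w2_odd q) (hinv_GO2 q), ellZ_GO2]
    push_cast; ring

lemma straight_w3 : IsStraight 1 (s1 * s0 * tau2) := by
  intro m _
  rw [sigmaProd_one, ell_w3_val]
  rcases Nat.even_or_odd m with ⟨q, hq⟩ | ⟨q, hq⟩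
  · rw [show m = 2*q from by omega, ell_model (Rp_w3_even q) (hinv_TrQ3 q), ellZ_TrQ3]
    push_cast; ring
  · rw [show m = 2*q+1 from by omega, ell_model (Rp_w3_odd q) (hinv_GO3 q), ellZ_GO3]
    push_cast; ring

lemma straight_w4 : IsStraight 1 (s1 * s2 * s0 * tau2) := by
  intro m _
  rw [sigmaProd_one, ell_w4_val, ell_model (Rp_w4_pow m) (hinv_TrQ4 m), ellZ_TrQ4]
  push_cast; ring




/-! ## Newton points -/

lemma newton_w2 :
    IsNewton 1 (s1 * s2 * tau2) (fun j => if (j : ℕ) = 0 then 1/2 else 0) := by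
  refine ⟨2, hv (-2) 0, one_le_two, one_pow 2, ?_, ⟨s1*s2*s1,
    mul_mem (mul_mem s1_W0 s2_W0) s1_W0, ?_⟩, by norm_num, by norm_num⟩
  · rw [sigmaProd_one]
    exact Rp.eq (by rw [show (2:ℕ) = 2*1 from rfl]; exact Rp_w2_even 1)
      (Rp_transl_hv (-2) 0) (by decide)
  · have h1 : (fun j => hv (-2) 0 j / ((2:ℕ):ℚ)) = hv (-1) 0 := by
      funext i; fin_cases i <;> norm_num [hv]
    rw [h1, apply_hv (((Rp_s1.mul Rp_s2).mul Rp_s1).cast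
      (show gmul (gmul gS1 gS2) gS1 = (vz 0 0, mz (-1) 0 0 1) from by decide)) (-1) 0]
    funext i
    fin_cases i <;> norm_num [hv, vz, mz]

lemma newton_w3 :
    IsNewton 1 (s1 * s0 * tau2) (fun j => if (j : ℕ) = 0 then 1/2 else 0) := by
  refine ⟨2, hv 0 2, one_le_two, one_pow 2, ?_, ⟨s1, s1_W0, ?_⟩, by norm_num, by norm_num⟩
  · rw [sigmaProd_one]
    exact Rp.eq (by rw [show (2:ℕ) = 2*1 from rfl]; exact Rp_w3_even 1)
      (Rp_transl_hv 0 2) (by decide)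
  · have h1 : (fun j => hv 0 2 j / ((2:ℕ):ℚ)) = hv 0 1 := by
      funext i; fin_cases i <;> norm_num [hv]
    rw [h1, apply_hv Rp_s1 0 1]
    funext i
    fin_cases i <;> norm_num [hv, gS1, vz, mz]

lemma newton_w4 : IsNewton 1 (s1 * s2 * s0 * tau2) (fun _ => 1/2) := by
  refine ⟨1, hv (-1) 1, le_refl 1, one_pow 1, ?_, ⟨s1*s2*s1,
    mul_mem (mul_mem s1_W0 s2_W0) s1_W0, ?_⟩, by norm_num, by norm_num⟩
  · rw [sigmaProd_one, pow_one]
    exact Rp.eq Rp_t5 (Rp_transl_hv (-1) 1) (by decide)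
  · have h1 : (fun j => hv (-1) 1 j / ((1:ℕ):ℚ)) = hv (-1) 1 := by
      funext i; fin_cases i <;> norm_num [hv]
    rw [h1, apply_hv (((Rp_s1.mul Rp_s2).mul Rp_s1).cast
      (show gmul (gmul gS1 gS2) gS1 = (vz 0 0, mz (-1) 0 0 1) from by decide)) (-1) 1]
    funext i
    fin_cases i <;> norm_num [hv, vz, mz]

/-! ## disequalities -/

lemma ne_w2_tau : s1 * s2 * tau2 ≠ tau2 := Rp.ne Rp_t3 Rp_t1 (by decide)
lemma ne_w2_s1tau : s1 * s2 * tau2 ≠ s1 * tau2 := Rp.ne Rp_t3 Rp_t2 (by decide)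
lemma ne_w3_tau : s1 * s0 * tau2 ≠ tau2 := Rp.ne Rp_t4 Rp_t1 (by decide)
lemma ne_w3_s1tau : s1 * s0 * tau2 ≠ s1 * tau2 := Rp.ne Rp_t4 Rp_t2 (by decide)
lemma ne_w4_tau : s1 * s2 * s0 * tau2 ≠ tau2 := Rp.ne Rp_t5 Rp_t1 (by decide)
lemma ne_w4_s1tau : s1 * s2 * s0 * tau2 ≠ s1 * tau2 := Rp.ne Rp_t5 Rp_t2 (by decide)

lemma EO_diff :
    EO {s0, s2} (fun _ => 1/2) \ EOcox 1 {s0, s2} (fun _ => 1/2) =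
      {s1 * s2 * tau2, s1 * s0 * tau2, s1 * s2 * s0 * tau2} := by
  rw [EO_eq, EOcox_eq]
  ext w
  simp only [Set.mem_diff, Set.mem_insert_iff, Set.mem_singleton_iff]
  constructor
  · rintro ⟨h5, hn⟩
    rcases h5 with rfl | rfl | rfl | rfl | rfl
    · exact absurd (Or.inl rfl) hn
    · exact absurd (Or.inr rfl) hn
    · exact Or.inl rfl
    · exact Or.inr (Or.inl rfl)
    · exact Or.inr (Or.inr rfl)
  · rintro (rfl | rfl | rfl)
    · exact ⟨Or.inr (Or.inr (Or.inl rfl)),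
        by rintro (h | h); exacts [ne_w2_tau h, ne_w2_s1tau h]⟩
    · exact ⟨Or.inr (Or.inr (Or.inr (Or.inl rfl))),
        by rintro (h | h); exacts [ne_w3_tau h, ne_w3_s1tau h]⟩
    · exact ⟨Or.inr (Or.inr (Or.inr (Or.inr rfl))),
        by rintro (h | h); exacts [ne_w4_tau h, ne_w4_s1tau h]⟩


end EO14
/-- (C̃₂, ω₂^∨, S̃ ∖ {s₁}, id). -/
theorem statement14 :
    EOcox 1 {s0, s2} (fun _ => 1/2) = {tau2, s1 * tau2} ∧
    EO {s0, s2} (fun _ => 1/2) \ EOcox 1 {s0, s2} (fun _ => 1/2) =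
      {s1 * s2 * tau2, s1 * s0 * tau2, s1 * s2 * s0 * tau2} ∧
    (IsStraight 1 (s1 * s2 * tau2) ∧ IsStraight 1 (s1 * s0 * tau2) ∧
     IsStraight 1 (s1 * s2 * s0 * tau2)) ∧
    (IsNewton 1 (s1 * s2 * tau2) (fun j => if (j : ℕ) = 0 then 1/2 else 0) ∧
     IsNewton 1 (s1 * s0 * tau2) (fun j => if (j : ℕ) = 0 then 1/2 else 0) ∧
     IsNewton 1 (s1 * s2 * s0 * tau2) (fun _ => 1/2)) ∧
    -- s₁s₂τ and s₁s₀τ have supp_σ = S̃, since Ad(τ₂) interchanges s₀ and s₂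
    (suppsig 1 (s1 * s2 * tau2) = St ∧ suppsig 1 (s1 * s0 * tau2) = St) := by
  exact ⟨EO14.EOcox_eq, EO14.EO_diff,
    ⟨EO14.straight_w2, EO14.straight_w3, EO14.straight_w4⟩,
    ⟨EO14.newton_w2, EO14.newton_w3, EO14.newton_w4⟩,
    EO14.suppsig_w2, EO14.suppsig_w3⟩
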